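/- For any nontrivial finite groups A and B, the outer automorphism group Out(G) of the free product G = A * B * ℤ contains a subgroup isomorphic to ℤ × ℤ. -/

import Mathlib

/-!
Let `A` and `B` be nontrivial finite groups and let `G = A * B * ℤ` be the free product of
`A`, `B` and an infinite cyclic group, realized as `Monoid.CoprodI` of the family
`A`, `B`, `FreeGroup PUnit`.
-/

namespace ABZfree

universe u

/-- Index type for the three free factors of `G = A * B * ℤ`. -/
inductive Idx3 : Type
  | A | B | Z

/-- The family of groups `A`, `B` and the free group on one generator (`≅ ℤ`). -/
def fam (A B : Type u) : Idx3 → Type u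
  | .A => A
  | .B => B
  | .Z => FreeGroup PUnit.{u + 1}

instance famGroup (A B : Type u) [Group A] [Group B] : ∀ i, Group (fam A B i)
  | .A => inferInstanceAs (Group A)
  | .B => inferInstanceAs (Group B)
  | .Z => inferInstanceAs (Group (FreeGroup PUnit.{u + 1}))

/-- The free product `G = A * B * ℤ`. -/
abbrev G (A B : Type u) [Group A] [Group B] : Type u := Monoid.CoprodI (fam A B)

/-- The inner automorphisms form a normal subgroup of `MulAut H`. -/
instance innNormal (H : Type*) [Group H] : ((MulAut.conj : H →* MulAut H).range).Normal := by
  constructor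
  rintro x ⟨g, rfl⟩ f
  refine ⟨f g, ?_⟩
  ext y
  simp [MulAut.conj_apply, mul_assoc, map_mul]

/-- The outer automorphism group `Out(H) = MulAut H ⧸ Inn(H)`. -/
abbrev Out (H : Type*) [Group H] : Type _ := MulAut H ⧸ (MulAut.conj : H →* MulAut H).range

/-! ### General lemmas on free products -/

section Words

open Monoid Monoid.CoprodI

variable {ι : Type*} {M : ι → Type*} [∀ i, Group (M i)]

theorem word_prod_injective :
    Function.Injective (Word.prod : Word M → Monoid.CoprodI M) := by
  classical
  intro w₁ w₂ h
  have h₁ : (Word.prod w₁) • (Word.empty : Word M) = w₁ := Word.equiv.right_inv w₁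
  have h₂ : (Word.prod w₂) • (Word.empty : Word M) = w₂ := Word.equiv.right_inv w₂
  rw [← h₁, ← h₂, h]

theorem neword_prod_ne_one {i j : ι} (w : NeWord M i j) : w.prod ≠ 1 := by
  intro h
  have : w.toWord = Word.empty := word_prod_injective (by simpa [NeWord.prod] using h)
  exact w.toList_ne_nil (congrArg Word.toList this)

theorem neword_toList_eq_of_prod_eq {i j k l : ι} {w : NeWord M i j} {v : NeWord M k l}
    (h : w.prod = v.prod) : w.toList = v.toList := by
  have : w.toWord = v.toWord := word_prod_injective h
  exact congrArg Word.toList this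

/-- snoc decomposition of a nonempty reduced word -/
theorem neword_snoc {i j : ι} (w : NeWord M i j) :
    (i = j ∧ w.prod = CoprodI.of w.last) ∨
      ∃ (k : ι) (u : NeWord M i k), k ≠ j ∧ w.prod = u.prod * CoprodI.of w.last := by
  induction w with
  | singleton x h => exact Or.inl ⟨rfl, by simp⟩
  | @append i j k l w₁ hne w₂ ih₁ ih₂ =>
    rcases ih₂ with ⟨hkl, h⟩ | ⟨k₂, u₂, hk₂, hu₂⟩
    · subst hkl
      exact Or.inr ⟨j, w₁, hne, by simp [h]⟩
    · exact Or.inr ⟨k₂, NeWord.append w₁ hne u₂, hk₂, by simp [hu₂, mul_assoc]⟩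

/-- A conjugate of a nontrivial letter by a nonempty word not ending in the letter's index
is not a letter. -/
theorem conj_neword_ne_of {i j k l : ι} (w : NeWord M i j) (hj : j ≠ k) {a : M k} (ha : a ≠ 1)
    (a' : M l) : w.prod * CoprodI.of a * w.prod⁻¹ ≠ CoprodI.of a' := by
  intro h
  have ha' : a' ≠ 1 := by
    rintro rfl
    rw [map_one] at h
    have : CoprodI.of a = (1 : Monoid.CoprodI M) := by
      have := congrArg (fun x => w.prod⁻¹ * x * w.prod) h
      simpa [mul_assoc] using this
    exact ha (CoprodI.of_injective k (by simpa using this))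
  let v : NeWord M i i :=
    NeWord.append (NeWord.append w hj (NeWord.singleton a ha)) hj.symm w.inv
  have hv : v.prod = CoprodI.of a' := by
    simp only [v, NeWord.append_prod, NeWord.prod_singleton, NeWord.inv_prod]
    rw [mul_assoc] at h ⊢
    exact h
  have hv' : v.prod = (NeWord.singleton a' ha').prod := by simpa using hv
  have hl := congrArg List.length (neword_toList_eq_of_prod_eq hv')
  have h₁ : w.toList.length ≠ 0 := fun hh => w.toList_ne_nil (List.length_eq_zero_iff.mp hh)
  simp only [v, NeWord.toList, List.length_append, List.length_singleton] at hl
  omega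

/-- If `g` conjugates a nontrivial letter of `M i` into a letter of `M i`, then `g` is itself
a letter of `M i`. -/
theorem mem_range_of_conj_eq {i : ι} {g : Monoid.CoprodI M} {a a' : M i} (ha : a ≠ 1)
    (h : g * CoprodI.of a * g⁻¹ = CoprodI.of a') : ∃ x : M i, g = CoprodI.of x := by
  classical
  rcases eq_or_ne g 1 with rfl | hg
  · exact ⟨1, by simp⟩
  have hprod : Word.prod (Word.equiv g) = g := Word.equiv.left_inv g
  have hne : Word.equiv g ≠ Word.empty := by
    intro he
    apply hg
    rw [← hprod, he, Word.prod_empty]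
  obtain ⟨i', j', w, hw⟩ := NeWord.of_word (Word.equiv g) hne
  have hwg : w.prod = g := by rw [NeWord.prod, hw, hprod]
  rcases eq_or_ne j' i with rfl | hj
  · rcases neword_snoc w with ⟨hii, hpr⟩ | ⟨k, u, hk, hu⟩
    · exact ⟨w.last, by rw [← hwg, hpr]⟩
    · exfalso
      have ha₂ : w.last * a * w.last⁻¹ ≠ 1 := by
        intro h2
        apply ha
        have := congrArg (fun x => w.last⁻¹ * x * w.last) h2
        simpa [mul_assoc] using this
      apply conj_neword_ne_of u hk ha₂ a'
      rw [← h, ← hwg, hu]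
      simp only [map_mul, map_inv, mul_inv_rev, mul_assoc]
  · exfalso
    apply conj_neword_ne_of w hj ha a'
    rw [hwg]
    exact h

/-- Letters from distinct factors are distinct, unless trivial. -/
theorem eq_one_of_of_eq_of {i j : ι} (hij : i ≠ j) {x : M i} {y : M j}
    (h : CoprodI.of x = CoprodI.of y) : x = 1 := by
  by_contra hx
  by_cases hy : y = 1
  · subst hy
    rw [map_one] at h
    exact hx (CoprodI.of_injective i (by simpa using h))
  · have : (NeWord.singleton x hx).prod = (NeWord.singleton y hy).prod := by simpa using h
    have hl := neword_toList_eq_of_prod_eq this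
    simp only [NeWord.toList, List.cons.injEq] at hl
    exact hij (congrArg Sigma.fst hl.1)

end Words

/-! ### The concrete setting -/

section Main

open Monoid Monoid.CoprodI

variable {A B : Type u} [Group A] [Group B]

/-- The distinguished generator of the `ℤ` factor. -/
def tau : G A B := CoprodI.of (i := Idx3.Z) (FreeGroup.of PUnit.unit)

/-- `c = a * b` as an element of `G`. -/
def cel (a : A) (b : B) : G A B :=
  CoprodI.of (i := Idx3.A) a * CoprodI.of (i := Idx3.B) b

theorem hAB : (Idx3.A : Idx3) ≠ Idx3.B := fun h => Idx3.noConfusion h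
theorem hAZ : (Idx3.A : Idx3) ≠ Idx3.Z := fun h => Idx3.noConfusion h
theorem hBZ : (Idx3.B : Idx3) ≠ Idx3.Z := fun h => Idx3.noConfusion h

theorem exists_cword (a : A) (b : B) (ha : a ≠ (1 : A)) (hb : b ≠ (1 : B)) :
    ∀ m : ℤ, m ≠ 0 → ∃ (i j : Idx3) (w : NeWord (fam A B) i j),
      i ≠ Idx3.Z ∧ j ≠ Idx3.Z ∧ w.prod = cel a b ^ m := by
  have key : ∀ k : ℕ, ∃ w : NeWord (fam A B) Idx3.A Idx3.B, w.prod = cel a b ^ (k + 1 : ℕ) := by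
    intro k
    induction k with
    | zero =>
      refine ⟨NeWord.append (NeWord.singleton (a : fam A B Idx3.A) ha) hAB
        (NeWord.singleton (b : fam A B Idx3.B) hb), ?_⟩
      simp [cel]
      exact congrArg₂ (· * ·) (NeWord.prod_singleton _ _) (NeWord.prod_singleton _ _)
    | succ k ih =>
      obtain ⟨w, hw⟩ := ih
      refine ⟨NeWord.append w hAB.symm (NeWord.append
        (NeWord.singleton (a : fam A B Idx3.A) ha) hAB
        (NeWord.singleton (b : fam A B Idx3.B) hb)), ?_⟩
      simp [hw, cel, pow_succ, mul_assoc]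
      exact congrArg₂ (· * ·) (NeWord.prod_singleton _ _) (NeWord.prod_singleton _ _)
  intro m hm
  rcases lt_or_gt_of_ne hm with hneg | hpos
  · obtain ⟨k, hk⟩ : ∃ k : ℕ, -m = (k + 1 : ℕ) := by
      refine ⟨(-m).toNat - 1, ?_⟩
      omega
    obtain ⟨w, hw⟩ := key k
    refine ⟨Idx3.B, Idx3.A, w.inv, hBZ, hAZ, ?_⟩
    rw [NeWord.inv_prod, hw]
    rw [show m = -((k + 1 : ℕ) : ℤ) by omega]
    rw [zpow_neg, zpow_natCast]
  · obtain ⟨k, hk⟩ : ∃ k : ℕ, m = (k + 1 : ℕ) := by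
      refine ⟨m.toNat - 1, ?_⟩
      omega
    obtain ⟨w, hw⟩ := key k
    refine ⟨Idx3.A, Idx3.B, w, hAZ, hBZ, ?_⟩
    rw [hw, hk, zpow_natCast]

theorem tau_factor_eq {a : A} {b : B} (ha : a ≠ 1) (hb : b ≠ 1) {m n : ℤ}
    (h : cel a b ^ m * tau * cel a b ^ n = tau) : m = 0 ∧ n = 0 := by
  have hz : (FreeGroup.of PUnit.unit : fam A B Idx3.Z) ≠ 1 := FreeGroup.of_ne_one _
  by_cases hm : m = 0
  · subst hm
    by_cases hn : n = 0
    · exact ⟨rfl, hn⟩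
    · exfalso
      obtain ⟨i, j, w, hi, hj, hw⟩ := exists_cword a b ha hb n hn
      apply neword_prod_ne_one w
      rw [hw]
      have := congrArg (fun x => tau⁻¹ * x) h
      simpa [mul_assoc] using this
  · by_cases hn : n = 0
    · exfalso
      obtain ⟨i, j, w, hi, hj, hw⟩ := exists_cword a b ha hb m hm
      apply neword_prod_ne_one w
      rw [hw]
      have := congrArg (fun x => x * tau⁻¹) h
      simpa [hn, mul_assoc] using this
    · exfalso
      obtain ⟨i₁, j₁, w₁, hi₁, hj₁, hw₁⟩ := exists_cword a b ha hb m hm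
      obtain ⟨i₂, j₂, w₂, hi₂, hj₂, hw₂⟩ := exists_cword a b ha hb n hn
      let v : NeWord (fam A B) i₁ j₂ :=
        NeWord.append (NeWord.append w₁ hj₁
          (NeWord.singleton (M := fam A B) (i := Idx3.Z) _ hz)) (Ne.symm hi₂) w₂
      have hv : v.prod = (NeWord.singleton (M := fam A B) (i := Idx3.Z) _ hz).prod := by
        simp only [v, NeWord.append_prod, NeWord.prod_singleton, hw₁, hw₂]
        have e : (NeWord.singleton (M := fam A B) (i := Idx3.Z) _ hz).prod = tau :=
          NeWord.prod_singleton _ _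
        rw [e]
        simpa [tau, mul_assoc] using h
      have hl := congrArg List.length (neword_toList_eq_of_prod_eq hv)
      have h₁ : w₁.toList.length ≠ 0 := fun hh => w₁.toList_ne_nil (List.length_eq_zero_iff.mp hh)
      have h₂ : w₂.toList.length ≠ 0 := fun hh => w₂.toList_ne_nil (List.length_eq_zero_iff.mp hh)
      simp only [v, NeWord.toList, List.length_append, List.length_singleton] at hl
      omega

/-! ### The endomorphisms -/

variable (A B)

/-- The endomorphism of `G` fixing `A` and `B` and sending `t ↦ c^m t c^n`. -/
noncomputable def Efun (a : A) (b : B) (p : ℤ × ℤ) : G A B →* G A B :=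
  CoprodI.lift fun i =>
    match i with
    | .A => CoprodI.of
    | .B => CoprodI.of
    | .Z => FreeGroup.lift fun _ => cel a b ^ p.1 * tau * cel a b ^ p.2

variable {A B}

theorem Efun_ofA (a : A) (b : B) (p : ℤ × ℤ) (x : fam A B Idx3.A) :
    Efun A B a b p (CoprodI.of x) = CoprodI.of x := by
  simp [Efun, CoprodI.lift_of]

theorem Efun_ofB (a : A) (b : B) (p : ℤ × ℤ) (x : fam A B Idx3.B) :
    Efun A B a b p (CoprodI.of x) = CoprodI.of x := by
  simp [Efun, CoprodI.lift_of]

theorem Efun_tau (a : A) (b : B) (p : ℤ × ℤ) :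
    Efun A B a b p tau = cel a b ^ p.1 * tau * cel a b ^ p.2 := by
  simp only [Efun, tau, CoprodI.lift_of]
  exact FreeGroup.lift_apply_of

theorem Efun_cel (a : A) (b : B) (p : ℤ × ℤ) :
    Efun A B a b p (cel a b) = cel a b := by
  simp only [cel, map_mul]
  rw [Efun_ofA a b p a, Efun_ofB a b p b]

theorem Efun_comp (a : A) (b : B) (p q : ℤ × ℤ) :
    (Efun A B a b p).comp (Efun A B a b q) = Efun A B a b (p + q) := by
  apply CoprodI.ext_hom
  intro i
  match i with
  | .A => ext x; simp [MonoidHom.comp_apply, Efun_ofA]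
  | .B => ext x; simp [MonoidHom.comp_apply, Efun_ofB]
  | .Z =>
    apply FreeGroup.ext_hom
    intro u
    cases u
    show Efun A B a b p (Efun A B a b q tau) = Efun A B a b (p + q) tau
    rw [Efun_tau a b q, Efun_tau a b (p + q)]
    simp only [map_mul, map_zpow, Efun_cel, Efun_tau]
    calc cel a b ^ q.1 * (cel a b ^ p.1 * tau * cel a b ^ p.2) * cel a b ^ q.2
        = (cel a b ^ q.1 * cel a b ^ p.1) * tau * (cel a b ^ p.2 * cel a b ^ q.2) := by
          simp only [mul_assoc]
      _ = cel a b ^ (p + q).1 * tau * cel a b ^ (p + q).2 := by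
          rw [← zpow_add, ← zpow_add, add_comm q.1 p.1]
          rfl

theorem Efun_zero (a : A) (b : B) : Efun A B a b 0 = MonoidHom.id (G A B) := by
  apply CoprodI.ext_hom
  intro i
  match i with
  | .A => ext x; simp [Efun_ofA]
  | .B => ext x; simp [Efun_ofB]
  | .Z =>
    apply FreeGroup.ext_hom
    intro u
    cases u
    show Efun A B a b 0 tau = tau
    rw [Efun_tau]
    rw [show ((0 : ℤ × ℤ)).1 = (0 : ℤ) from rfl, show ((0 : ℤ × ℤ)).2 = (0 : ℤ) from rfl]
    rw [zpow_zero, one_mul, mul_one]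

/-- The automorphism of `G` determined by `p : ℤ × ℤ`. -/
noncomputable def Eaut (a : A) (b : B) (p : ℤ × ℤ) : MulAut (G A B) where
  toFun := Efun A B a b p
  invFun := Efun A B a b (-p)
  left_inv x := by
    have := congrArg (fun f => f x) (Efun_comp a b (-p) p)
    simpa [MonoidHom.comp_apply, Efun_zero a b] using this
  right_inv x := by
    have := congrArg (fun f => f x) (Efun_comp a b p (-p))
    simpa [MonoidHom.comp_apply, Efun_zero a b] using this
  map_mul' := map_mul _

theorem Eaut_apply (a : A) (b : B) (p : ℤ × ℤ) (x : G A B) :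
    Eaut a b p x = Efun A B a b p x := rfl

/-- The homomorphism `ℤ × ℤ →* MulAut G`. -/
noncomputable def Phi (a : A) (b : B) : Multiplicative (ℤ × ℤ) →* MulAut (G A B) where
  toFun p := Eaut a b p.toAdd
  map_one' := by
    ext x
    show Efun A B a b ((1 : Multiplicative (ℤ × ℤ)).toAdd) x = x
    rw [show ((1 : Multiplicative (ℤ × ℤ)).toAdd) = (0 : ℤ × ℤ) from rfl]
    rw [Efun_zero]; rfl
  map_mul' p q := by
    ext x
    show Efun A B a b (p.toAdd + q.toAdd) x = Eaut a b p.toAdd (Eaut a b q.toAdd x)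
    rw [← Efun_comp a b p.toAdd q.toAdd]
    rfl

/-- The composite homomorphism into `Out G`. -/
noncomputable def Psi (a : A) (b : B) : Multiplicative (ℤ × ℤ) →* Out (G A B) :=
  (QuotientGroup.mk' _).comp (Phi a b)

theorem Psi_injective {a : A} {b : B} (ha : a ≠ 1) (hb : b ≠ 1) :
    Function.Injective (Psi a b) := by
  rw [injective_iff_map_eq_one]
  intro p hp
  have hp' : Phi a b p ∈ (MulAut.conj : G A B →* MulAut (G A B)).range := by
    rwa [Psi, MonoidHom.comp_apply, QuotientGroup.mk'_apply, QuotientGroup.eq_one_iff] at hp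
  obtain ⟨g, hg⟩ := hp'
  have hfun : ∀ x : G A B, g * x * g⁻¹ = Efun A B a b p.toAdd x := by
    intro x
    have := congrArg (fun f => f x) hg
    simpa [MulAut.conj_apply, Eaut_apply, Phi] using this
  -- `g` centralizes the chosen generators
  have hga := hfun (CoprodI.of (i := Idx3.A) a)
  rw [Efun_ofA a b p.toAdd a] at hga
  have hgb := hfun (CoprodI.of (i := Idx3.B) b)
  rw [Efun_ofB a b p.toAdd b] at hgb
  obtain ⟨x, hx⟩ := mem_range_of_conj_eq (i := Idx3.A) ha hga
  obtain ⟨y, hy⟩ := mem_range_of_conj_eq (i := Idx3.B) hb hgb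
  have hg1 : g = 1 := by
    rcases eq_or_ne x 1 with rfl | hx1
    · simpa using hx
    · have : x = 1 := eq_one_of_of_eq_of hAB (hx ▸ hy : CoprodI.of x = CoprodI.of y)
      exact absurd this hx1
  -- so the automorphism fixes `tau`
  have htau := hfun tau
  rw [hg1, Efun_tau] at htau
  simp only [one_mul, inv_one, mul_one] at htau
  have := tau_factor_eq ha hb htau.symm
  have hp0 : p.toAdd = (0, 0) := Prod.ext this.1 this.2
  have : p = Multiplicative.ofAdd ((0, 0) : ℤ × ℤ) := by
    rw [← hp0]; rfl
  exact this

end Main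

/-- For nontrivial finite groups `A`, `B` and `G = A * B * ℤ`, the group `Out(G)`
contains a subgroup isomorphic to `ℤ × ℤ`. -/
theorem out_contains_Z_times_Z (A B : Type u) [Group A] [Group B] [Finite A] [Finite B]
    [Nontrivial A] [Nontrivial B] :
    ∃ H : Subgroup (Out (G A B)), Nonempty (H ≃* Multiplicative (ℤ × ℤ)) := by
  obtain ⟨a, ha⟩ := exists_ne (1 : A)
  obtain ⟨b, hb⟩ := exists_ne (1 : B)
  refine ⟨(Psi a b).range, ⟨(MonoidHom.ofInjective (Psi_injective ha hb)).symm⟩⟩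

end ABZfree
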